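/- If x ∈ [-2^{ℓ-2}, 2^{ℓ-2}-1] is upcast via the biased protocol (compute UpCast of x + 2^{ℓ-2} over Z_{2^ℓ} into Z_{2^{ℓ'}}, then subtract 2^{ℓ-2}), the result equals the two's-complement representation of x over Z_{2^{ℓ'}}: that is, (UpCast((x + 2^{ℓ-2}) mod 2^ℓ) − 2^{ℓ-2}) mod 2^{ℓ'} = x mod 2^{ℓ'}. -/
import Mathlib

lemma div_one_of_lt_two_mul {a H : ℤ} (h0 : 0 < H) (h1 : H ≤ a) (h2 : a < 2 * H) :
    a / H = 1 := by
  have h3 : (a - H + 1 * H) / H = (a - H) / H + 1 :=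
    Int.add_mul_ediv_right _ _ h0.ne'
  have h4 : (a - H) / H = 0 := Int.ediv_eq_zero_of_lt (by omega) (by omega)
  have : a - H + 1 * H = a := by ring
  rw [this] at h3
  omega

/-- Bias elimination after upcast: upcasting the biased value and subtracting the bias
recovers the two's-complement representation of x over the larger ring. -/
theorem stmt17 (ℓ ℓ' : ℕ) (hℓ2 : 2 ≤ ℓ) (hℓ : ℓ < ℓ') (x : ℤ)
    (hx : -2 ^ (ℓ - 2) ≤ x ∧ x ≤ 2 ^ (ℓ - 2) - 1)
    (r : ℤ) (hr : 0 ≤ r ∧ r < 2 ^ ℓ)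
    (b y w u : ℤ)
    (hb : b = (x + 2 ^ (ℓ - 2)) % 2 ^ ℓ)
    (hy : y = (b + r) % 2 ^ ℓ)
    (hw : w = if (r / 2 ^ (ℓ - 1)) % 2 = 1 ∧ (y / 2 ^ (ℓ - 1)) % 2 = 0 then 1 else 0)
    (hu : u = (y - r + w * 2 ^ ℓ) % 2 ^ ℓ') :
    (u - 2 ^ (ℓ - 2)) % 2 ^ ℓ' = x % 2 ^ ℓ' := by
  set H : ℤ := 2 ^ (ℓ - 1) with hH
  have hHpos : 0 < H := by positivity
  have hQpos : (0:ℤ) < 2 ^ (ℓ - 2) := by positivity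
  have hℓ1 : ℓ - 1 = (ℓ - 2) + 1 := by omega
  have hℓ0 : ℓ = (ℓ - 1) + 1 := by omega
  have hHQ : H = 2 * 2 ^ (ℓ - 2) := by rw [hH, hℓ1, pow_succ]; ring
  have hLH : (2:ℤ) ^ ℓ = 2 * H := by
    calc (2:ℤ) ^ ℓ = 2 ^ ((ℓ - 1) + 1) := by rw [← hℓ0]
    _ = 2 * H := by rw [hH, pow_succ]; ring
  -- b is unreduced
  have hb' : b = x + 2 ^ (ℓ - 2) := by
    rw [hb]; exact Int.emod_eq_of_lt (by omega) (by omega)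
  have hbH : b < H := by omega
  have hb0 : 0 ≤ b := by omega
  -- key: y - r + w * 2^ℓ = b
  have key : y - r + w * 2 ^ ℓ = b := by
    by_cases hc : b + r < 2 ^ ℓ
    · have hy' : y = b + r := by
        rw [hy]; exact Int.emod_eq_of_lt (by omega) hc
      have hw0 : w = 0 := by
        rw [hw, if_neg]
        rintro ⟨h1, h2⟩
        by_cases hrH : r < H
        · have : r / H = 0 := Int.ediv_eq_zero_of_lt hr.1 hrH
          omega
        · have hyH : y / H = 1 :=
            div_one_of_lt_two_mul hHpos (by omega) (by omega)
          omega
      subst hw0; omega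
    · push_neg at hc
      have hy' : y = b + r - 2 ^ ℓ := by
        have h1 : (b + r - 2 ^ ℓ) % 2 ^ ℓ = b + r - 2 ^ ℓ :=
          Int.emod_eq_of_lt (by omega) (by omega)
        have h2 : (b + r) % 2 ^ ℓ = (b + r - 2 ^ ℓ) % 2 ^ ℓ := by
          conv_lhs => rw [show b + r = b + r - 2 ^ ℓ + 2 ^ ℓ * 1 by ring]
          rw [Int.add_mul_emod_self_left]
        rw [hy, h2, h1]
      have hrH : r / H = 1 := div_one_of_lt_two_mul hHpos (by omega) (by omega)
      have hyH : y / H = 0 := Int.ediv_eq_zero_of_lt (by omega) (by omega)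
      have hw1 : w = 1 := by rw [hw, if_pos]; omega
      subst hw1; omega
  -- u is unreduced
  have hpow : (2:ℤ) ^ ℓ < 2 ^ ℓ' := by
    exact pow_lt_pow_right₀ (by norm_num) hℓ
  have hu' : u = b := by
    rw [hu, key]; exact Int.emod_eq_of_lt hb0 (by omega)
  rw [hu', hb']
  ring_nf
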